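/- Under the hypotheses of the telescoping lemma, with f(s) = ψ^π(s) (the successor features of policy π) and μ the discounted occupancy measure of trajectories in a replay buffer with the same initial distribution P_0, the expected initial-state successor features satisfy E_{S∼P_0}[ψ^π(S)] = (1−γ)^{-1}·E_{(S,S')∼μ⊗K}[ψ^π(S) − γ·ψ^π(S')]. -/

import Mathlib

/-- Proposition 1: the expected initial-state successor features of a policy `π` (with
successor features `ψ` satisfying the Bellman equation under the policy kernel `Kπ`)
can be estimated from transitions `(S, S')` sampled from any occupancy measure `μ`
(generated by a buffer kernel `K`) with the same initial distribution `P_0`: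
`E_{S∼P0}[ψ(S)] = (1−γ)⁻¹·E_{(S,S')∼μ⊗K}[ψ(S) − γ·ψ(S')]`. -/
theorem initial_sf_from_buffer (S : Type*) [Fintype S] (d : ℕ)
    (γ : ℝ) (hγ0 : 0 ≤ γ) (hγ1 : γ < 1)
    (P0 : S → ℝ) (hP0nn : ∀ s, 0 ≤ P0 s) (hP0sum : ∑ s, P0 s = 1)
    (K : S → S → ℝ) (hKnn : ∀ s s', 0 ≤ K s s') (hKsum : ∀ s, ∑ s', K s s' = 1)
    (p : ℕ → S → ℝ) (hp0 : p 0 = P0)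
    (hpnn : ∀ t s, 0 ≤ p t s) (hpsum : ∀ t, ∑ s, p t s = 1)
    (hrec : ∀ t s', p (t + 1) s' = ∑ s, p t s * K s s')
    (μ : S → ℝ) (hμ : ∀ s, μ s = (1 - γ) * ∑' t : ℕ, γ ^ t * p t s)
    (φ : S → EuclideanSpace ℝ (Fin d))
    (Kπ : S → S → ℝ) (hKπnn : ∀ s s', 0 ≤ Kπ s s') (hKπsum : ∀ s, ∑ s', Kπ s s' = 1)
    (ψ : S → EuclideanSpace ℝ (Fin d))
    (hψ : ∀ s, ψ s = φ s + γ • ∑ s', Kπ s s' • ψ s') :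
    ∑ s, P0 s • ψ s = (1 - γ)⁻¹ • ∑ s, μ s • (ψ s - γ • ∑ s', K s s' • ψ s') := by
  classical
  set v : S → EuclideanSpace ℝ (Fin d) := fun s => ψ s - γ • ∑ s', K s s' • ψ s' with hv
  set g : ℕ → EuclideanSpace ℝ (Fin d) := fun t => ∑ s, p t s • ψ s with hg
  have hple : ∀ t s, p t s ≤ 1 := by
    intro t s
    calc p t s ≤ ∑ s', p t s' :=
      Finset.single_le_sum (fun i _ => hpnn t i) (Finset.mem_univ s)
    _ = 1 := hpsum t
  have hgeo : Summable (fun t : ℕ => γ ^ t) := summable_geometric_of_lt_one hγ0 hγ1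
  have hCbound : ∀ t, ‖g t‖ ≤ ∑ s, ‖ψ s‖ := by
    intro t
    calc ‖g t‖ ≤ ∑ s, ‖p t s • ψ s‖ := norm_sum_le _ _
    _ ≤ ∑ s, ‖ψ s‖ := by
        apply Finset.sum_le_sum
        intro s _
        rw [norm_smul, Real.norm_eq_abs, abs_of_nonneg (hpnn t s)]
        exact mul_le_of_le_one_left (norm_nonneg _) (hple t s)
  set C : ℝ := ∑ s, ‖ψ s‖ with hC
  set a : ℕ → EuclideanSpace ℝ (Fin d) := fun t => γ ^ t • g t with ha
  have hanorm : ∀ t, ‖a t‖ ≤ γ ^ t * C := by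
    intro t
    rw [ha, norm_smul, Real.norm_eq_abs, abs_of_nonneg (pow_nonneg hγ0 t)]
    exact mul_le_mul_of_nonneg_left (hCbound t) (pow_nonneg hγ0 t)
  have hatend : Filter.Tendsto a Filter.atTop (nhds 0) := by
    apply squeeze_zero_norm hanorm
    have := (tendsto_pow_atTop_nhds_zero_of_lt_one hγ0 hγ1).mul_const C
    simpa using this
  -- key pointwise identity
  have hW : ∀ t, ∑ s, p t s • (γ • ∑ s', K s s' • ψ s') = γ • g (t + 1) := by
    intro t
    have : ∑ s, p t s • (∑ s', K s s' • ψ s') = g (t + 1) := by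
      rw [hg]
      simp only [Finset.smul_sum, smul_smul]
      rw [Finset.sum_comm]
      congr 1
      ext s'
      rw [← Finset.sum_smul, ← hrec t s']
    calc ∑ s, p t s • (γ • ∑ s', K s s' • ψ s')
        = γ • ∑ s, p t s • (∑ s', K s s' • ψ s') := by
          rw [Finset.smul_sum]
          congr 1; ext s; rw [smul_comm]
      _ = γ • g (t + 1) := by rw [this]
  have key : ∀ t, (∑ s, (γ ^ t * p t s) • v s) = a t - a (t + 1) := by
    intro t
    have : ∑ s, (γ ^ t * p t s) • v s = γ ^ t • (g t - γ • g (t + 1)) := by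
      rw [hv, smul_sub, ← hW t, hg]
      simp only [smul_sub, Finset.sum_sub_distrib, Finset.smul_sum, smul_smul, mul_assoc]
    rw [this, ha, smul_sub, smul_smul, ← pow_succ]
  -- summabilities
  have hsum1 : ∀ s : S, Summable (fun t : ℕ => (γ ^ t * p t s) • v s) := by
    intro s
    apply Summable.of_norm_bounded (g := fun t => γ ^ t * ‖v s‖) (hgeo.mul_right _)
    intro t
    rw [norm_smul, Real.norm_eq_abs, abs_of_nonneg (mul_nonneg (pow_nonneg hγ0 t) (hpnn t s))]
    apply mul_le_mul_of_nonneg_right _ (norm_nonneg _)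
    calc γ ^ t * p t s ≤ γ ^ t * 1 :=
      mul_le_mul_of_nonneg_left (hple t s) (pow_nonneg hγ0 t)
    _ = γ ^ t := mul_one _
  have hsum2 : ∀ s : S, Summable (fun t : ℕ => γ ^ t * p t s) := by
    intro s
    apply Summable.of_nonneg_of_le (fun t => mul_nonneg (pow_nonneg hγ0 t) (hpnn t s)) _ hgeo
    intro t
    calc γ ^ t * p t s ≤ γ ^ t * 1 :=
      mul_le_mul_of_nonneg_left (hple t s) (pow_nonneg hγ0 t)
    _ = γ ^ t := mul_one _
  have hsumd : Summable (fun t => a t - a (t + 1)) := by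
    apply Summable.of_norm_bounded (g := fun t => γ ^ t * (2 * C)) (hgeo.mul_right _)
    intro t
    calc ‖a t - a (t + 1)‖ ≤ ‖a t‖ + ‖a (t + 1)‖ := norm_sub_le _ _
    _ ≤ γ ^ t * C + γ ^ (t + 1) * C := add_le_add (hanorm t) (hanorm (t + 1))
    _ ≤ γ ^ t * C + γ ^ t * C := by
        have hCnn : 0 ≤ C := Finset.sum_nonneg fun _ _ => norm_nonneg _
        exact add_le_add le_rfl
          (mul_le_mul_of_nonneg_right (pow_le_pow_of_le_one hγ0 hγ1.le (Nat.le_succ t)) hCnn)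
    _ = γ ^ t * (2 * C) := by ring
  -- telescoping sum
  have htel : (∑' t, (a t - a (t + 1))) = g 0 := by
    have h1 : Filter.Tendsto (fun n => ∑ t ∈ Finset.range n, (a t - a (t + 1)))
        Filter.atTop (nhds (∑' t, (a t - a (t + 1)))) :=
      hsumd.hasSum.tendsto_sum_nat
    have h2 : Filter.Tendsto (fun n => ∑ t ∈ Finset.range n, (a t - a (t + 1)))
        Filter.atTop (nhds (a 0)) := by
      have heq : ∀ n, ∑ t ∈ Finset.range n, (a t - a (t + 1)) = a 0 - a n := by
        intro n; exact Finset.sum_range_sub' a n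
      simp only [heq]
      have := (tendsto_const_nhds (x := a 0)).sub hatend
      simpa using this
    have := tendsto_nhds_unique h1 h2
    rw [this, ha]; simp
  have hfinal : ∑ s, μ s • v s = (1 - γ) • g 0 := by
    calc ∑ s, μ s • v s = ∑ s, (1 - γ) • ((∑' t : ℕ, γ ^ t * p t s) • v s) := by
          apply Finset.sum_congr rfl
          intro s _
          rw [hμ s, mul_smul]
      _ = (1 - γ) • ∑ s, (∑' t : ℕ, γ ^ t * p t s) • v s := (Finset.smul_sum).symm
      _ = (1 - γ) • ∑ s, ∑' t : ℕ, (γ ^ t * p t s) • v s := by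
          congr 1
          apply Finset.sum_congr rfl
          intro s _
          exact (Summable.tsum_smul_const (hsum2 s) (v s)).symm
      _ = (1 - γ) • ∑' t : ℕ, ∑ s, (γ ^ t * p t s) • v s := by
          congr 1
          exact (Summable.tsum_finsetSum (fun s _ => hsum1 s)).symm
      _ = (1 - γ) • ∑' t : ℕ, (a t - a (t + 1)) := by
          congr 1
          exact tsum_congr key
      _ = (1 - γ) • g 0 := by rw [htel]
  rw [hfinal, smul_smul, inv_mul_cancel₀ (by linarith), one_smul, hg]
  simp [hp0]
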